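/- Let p ≥ 1 and let v₁, …, v_p, w ∈ ℂ satisfy v_j ≠ w for all j, v_k ≠ v₁ for k ≥ 2, and v_j − v₁ ≠ −1 for all j. Then 1/(v₁ − w) = Σ_{j=1}^{p} [ 1/((v_j − v₁ + 1)(v_j − w)) ] · ∏_{k=j+1}^{p} f^+(v_k, w)/f^+(v_k, v₁). -/

import Mathlib

open scoped BigOperators Classical

noncomputable section

namespace TY

/-- `f⁺(u,v) := (u - v + 1)/(u - v)`. -/
def fp (a b : ℂ) : ℂ := (a - b + 1) / (a - b)

/-- for `p ≥ 1` and `v₁, …, v_p, w` with `v_j ≠ w`, `v_k ≠ v₁` (k ≥ 2) and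
`v_j − v₁ ≠ −1`, one has
`1/(v₁ − w) = Σ_{j=1}^{p} [1/((v_j − v₁ + 1)(v_j − w))] ∏_{k=j+1}^{p} f⁺(v_k,w)/f⁺(v_k,v₁)`
(indices realised 0-based, so `v₁ = v 0`). -/
theorem partial_fraction_sum_identity (p : ℕ) (hp : 0 < p) (v : Fin p → ℂ) (w : ℂ)
    (h1 : ∀ j, v j ≠ w)
    (h2 : ∀ k : Fin p, k ≠ ⟨0, hp⟩ → v k ≠ v ⟨0, hp⟩)
    (h3 : ∀ j, v j - v ⟨0, hp⟩ ≠ -1) :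
    1 / (v ⟨0, hp⟩ - w) =
      ∑ j : Fin p, (1 / ((v j - v ⟨0, hp⟩ + 1) * (v j - w))) *
        ∏ k ∈ Finset.univ.filter (fun k => j < k), fp (v k) w / fp (v k) (v ⟨0, hp⟩) := by
  set v0 := v ⟨0, hp⟩ with hv0
  have hv0w : v0 - w ≠ 0 := sub_ne_zero.mpr (h1 _)
  have key : ∀ i : Fin p, 1 ≤ i.val →
      1 / ((v i - v0 + 1) * (v i - w)) + 1 / (v0 - w) * (fp (v i) w / fp (v i) v0)
        = 1 / (v0 - w) := by
    intro i hi
    have hne : i ≠ ⟨0, hp⟩ := by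
      intro h
      rw [h] at hi
      simp at hi
    have h4 : v i - v0 ≠ 0 := sub_ne_zero.mpr (h2 i hne)
    have h5 : v i - v0 + 1 ≠ 0 := by
      intro h
      exact h3 i (by linear_combination h)
    have h6 : v i - w ≠ 0 := sub_ne_zero.mpr (h1 i)
    have h7 : fp (v i) v0 ≠ 0 := by
      simp only [fp]
      exact div_ne_zero h5 h4
    simp only [fp]
    field_simp
    ring
  have aux : ∀ d m : ℕ, m + d = p → 1 ≤ m →
      1 / (v0 - w) =
        (∑ j ∈ Finset.univ.filter (fun j : Fin p => m ≤ j.val),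
          (1 / ((v j - v0 + 1) * (v j - w))) *
            ∏ k ∈ Finset.univ.filter (fun k => j < k), fp (v k) w / fp (v k) v0)
        + 1 / (v0 - w) *
            ∏ k ∈ Finset.univ.filter (fun k : Fin p => m ≤ k.val),
              fp (v k) w / fp (v k) v0 := by
    intro d
    induction d with
    | zero =>
      intro m hm _
      have hempty : Finset.univ.filter (fun k : Fin p => m ≤ k.val) = ∅ := by
        apply Finset.filter_false_of_mem
        intro k _
        have := k.2
        omega
      rw [hempty]
      simp
    | succ d ih =>
      intro m hm hm1
      have hmp : m < p := by omega
      set i : Fin p := ⟨m, hmp⟩ with hi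
      have hset : Finset.univ.filter (fun k : Fin p => m ≤ k.val)
          = insert i (Finset.univ.filter (fun k : Fin p => m + 1 ≤ k.val)) := by
        ext k
        simp [hi, Fin.ext_iff]
        omega
      have hnot : i ∉ Finset.univ.filter (fun k : Fin p => m + 1 ≤ k.val) := by
        simp [hi]
      have hfilt : Finset.univ.filter (fun k : Fin p => i < k)
          = Finset.univ.filter (fun k : Fin p => m + 1 ≤ k.val) := by
        ext k
        simp [hi, Fin.lt_def]
      rw [hset, Finset.sum_insert hnot, Finset.prod_insert hnot, hfilt]
      have hih := ih (m + 1) (by omega) (by omega)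
      have hk := key i (by simp [hi]; omega)
      set P := ∏ k ∈ Finset.univ.filter (fun k : Fin p => m + 1 ≤ k.val),
        fp (v k) w / fp (v k) v0 with hP
      linear_combination hih - P * hk
  have herase : (Finset.univ.erase (⟨0, hp⟩ : Fin p))
      = Finset.univ.filter (fun j : Fin p => 1 ≤ j.val) := by
    ext k
    simp [Fin.ext_iff]
    omega
  have hfilt0 : Finset.univ.filter (fun k : Fin p => (⟨0, hp⟩ : Fin p) < k)
      = Finset.univ.filter (fun k : Fin p => 1 ≤ k.val) := by
    ext k
    simp [Fin.lt_def]
    omega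
  rw [← Finset.add_sum_erase _ _ (Finset.mem_univ (⟨0, hp⟩ : Fin p)), herase, hfilt0]
  have haux := aux (p - 1) 1 (by omega) le_rfl
  have hv00 : v0 - v0 + 1 = 1 := by ring
  rw [← hv0, hv00]
  set P := ∏ k ∈ Finset.univ.filter (fun k : Fin p => 1 ≤ k.val),
    fp (v k) w / fp (v k) v0 with hP
  linear_combination haux

end TY
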